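/- Let Z, T be finite sets, Q : T → (Z → ℝ>0) a strictly positive conditional probability kernel, and P a probability distribution on T. Define φ(s) = ln Σ_z (Σ_t P(t) Q(z|t)^{1/(1-s)})^{1-s} for s ∈ [0,1). Then the right derivative of φ at s = 0 equals the mutual information I(P, Q) = Σ_{t,z} P(t) Q(z|t) ln( Q(z|t) / Q_Z(z) ), where Q_Z(z) = Σ_t P(t) Q(z|t). -/

import Mathlib

open Finset

/-- The right derivative of the Gallager-type function φ at 0 is the mutual
information I(P, Q). -/
theorem gallager_phi_deriv_at_zero
    {Z T : Type*} [Fintype Z] [Fintype T] [Nonempty Z] [Nonempty T]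
    (Q : T → Z → ℝ) (hQpos : ∀ t z, 0 < Q t z) (hQsum : ∀ t, ∑ z : Z, Q t z = 1)
    (P : T → ℝ) (hPnn : ∀ t, 0 ≤ P t) (hPsum : ∑ t : T, P t = 1)
    (φ : ℝ → ℝ)
    (hφ : ∀ s, φ s =
      Real.log (∑ z : Z, (∑ t : T, P t * Q t z ^ ((1 : ℝ) / (1 - s))) ^ (1 - s)))
    (I : ℝ)
    (hI : I = ∑ t : T, ∑ z : Z,
      P t * Q t z * Real.log (Q t z / ∑ t' : T, P t' * Q t' z)) :
    HasDerivWithinAt φ I (Set.Ici (0 : ℝ)) 0 := by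
  -- Notation
  set B : Z → ℝ → ℝ := fun z s => ∑ t : T, P t * Real.exp ((1 - s)⁻¹ * Real.log (Q t z)) with hB
  set D : Z → ℝ := fun z => ∑ t : T, P t * (Q t z * Real.log (Q t z)) with hD
  set Qz : Z → ℝ := fun z => ∑ t : T, P t * Q t z with hQz
  -- existence of a positive mass point
  obtain ⟨t0, ht0⟩ : ∃ t : T, 0 < P t := by
    by_contra h
    push_neg at h
    have : ∑ t : T, P t = 0 := Finset.sum_eq_zero fun t _ => le_antisymm (h t) (hPnn t)
    rw [hPsum] at this; norm_num at this
  have hBpos : ∀ z s, 0 < B z s := by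
    intro z s
    apply Finset.sum_pos' (fun t _ => mul_nonneg (hPnn t) (Real.exp_pos _).le)
    exact ⟨t0, Finset.mem_univ t0, mul_pos ht0 (Real.exp_pos _)⟩
  have hQzpos : ∀ z, 0 < Qz z := by
    intro z
    apply Finset.sum_pos' (fun t _ => mul_nonneg (hPnn t) (hQpos t z).le)
    exact ⟨t0, Finset.mem_univ t0, mul_pos ht0 (hQpos t0 z)⟩
  -- B z 0 = Qz z
  have hB0 : ∀ z, B z 0 = Qz z := by
    intro z
    simp only [hB, hQz]
    refine Finset.sum_congr rfl fun t _ => ?_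
    rw [sub_zero, inv_one, one_mul, Real.exp_log (hQpos t z)]
  -- derivative of s ↦ (1-s)⁻¹ at 0 is 1
  have hu : HasDerivAt (fun s : ℝ => (1 - s)⁻¹) 1 0 := by
    have h1s : HasDerivAt (fun s : ℝ => 1 - s) (-1) 0 := by
      simpa using (hasDerivAt_const (0 : ℝ) (1 : ℝ)).fun_sub (hasDerivAt_id 0)
    have := h1s.fun_inv (by norm_num)
    exact this.congr_deriv (by norm_num)
  have h1s : HasDerivAt (fun s : ℝ => 1 - s) (-1) 0 := by
    simpa using (hasDerivAt_const (0 : ℝ) (1 : ℝ)).fun_sub (hasDerivAt_id 0)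
  -- derivative of each exponential term
  have hf : ∀ t z, HasDerivAt (fun s : ℝ => Real.exp ((1 - s)⁻¹ * Real.log (Q t z)))
      (Q t z * Real.log (Q t z)) 0 := by
    intro t z
    have := (hu.mul_const (Real.log (Q t z))).exp
    convert this using 1
    rw [sub_zero, inv_one, one_mul, Real.exp_log (hQpos t z)]
  -- derivative of B z
  have hBderiv : ∀ z, HasDerivAt (B z) (D z) 0 := by
    intro z
    simp only [hB, hD]
    exact HasDerivAt.fun_sum fun t _ => (hf t z).const_mul (P t)
  -- derivative of s ↦ (1-s) * log (B z s)
  have hw : ∀ z, HasDerivAt (fun s : ℝ => (1 - s) * Real.log (B z s))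
      ((-1) * Real.log (B z 0) + (1 - 0) * (D z / B z 0)) 0 := by
    intro z
    exact h1s.mul ((hBderiv z).log (hBpos z 0).ne')
  -- derivative of g z = exp ((1-s) * log (B z s))
  have hg : ∀ z, HasDerivAt (fun s : ℝ => Real.exp ((1 - s) * Real.log (B z s)))
      (Qz z * ((-1) * Real.log (Qz z) + (D z / Qz z))) 0 := by
    intro z
    have := (hw z).exp
    convert this using 1
    rw [hB0 z, sub_zero, one_mul, Real.exp_log (hQzpos z), one_mul]
  -- F and its derivative
  have hF : HasDerivAt (fun s : ℝ => ∑ z : Z, Real.exp ((1 - s) * Real.log (B z s)))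
      (∑ z : Z, Qz z * ((-1) * Real.log (Qz z) + (D z / Qz z))) 0 :=
    HasDerivAt.fun_sum fun z _ => hg z
  -- F 0 = 1
  have hF0 : (∑ z : Z, Real.exp ((1 - (0:ℝ)) * Real.log (B z 0))) = 1 := by
    have : ∀ z, Real.exp ((1 - (0:ℝ)) * Real.log (B z 0)) = Qz z := by
      intro z
      rw [sub_zero, one_mul, Real.exp_log (hBpos z 0), hB0 z]
    rw [Finset.sum_congr rfl fun z _ => this z]
    simp only [hQz]
    rw [Finset.sum_comm]
    calc ∑ t : T, ∑ z : Z, P t * Q t z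
        = ∑ t : T, P t * ∑ z : Z, Q t z := by
          refine Finset.sum_congr rfl fun t _ => ?_
          rw [Finset.mul_sum]
      _ = 1 := by
          rw [Finset.sum_congr rfl fun t _ => by rw [hQsum t, mul_one]]
          exact hPsum
  -- φ equals log ∘ F
  have hφeq : φ = fun s => Real.log (∑ z : Z, Real.exp ((1 - s) * Real.log (B z s))) := by
    funext s
    rw [hφ s]
    congr 1
    refine Finset.sum_congr rfl fun z _ => ?_
    have hinner : (∑ t : T, P t * Q t z ^ ((1 : ℝ) / (1 - s))) = B z s := by
      refine Finset.sum_congr rfl fun t _ => ?_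
      rw [Real.rpow_def_of_pos (hQpos t z), one_div, mul_comm (Real.log (Q t z))]
    rw [hinner, Real.rpow_def_of_pos (hBpos z s), mul_comm (Real.log (B z s))]
  -- derivative of φ
  have hφderiv : HasDerivAt φ
      ((∑ z : Z, Qz z * ((-1) * Real.log (Qz z) + (D z / Qz z))) /
        (∑ z : Z, Real.exp ((1 - (0:ℝ)) * Real.log (B z 0)))) 0 := by
    rw [hφeq]
    exact hF.log (by rw [hF0]; norm_num)
  rw [hF0, div_one] at hφderiv
  -- identify the derivative with I
  have hval : (∑ z : Z, Qz z * ((-1) * Real.log (Qz z) + (D z / Qz z))) = I := by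
    have hterm : ∀ z, Qz z * ((-1) * Real.log (Qz z) + (D z / Qz z))
        = D z - Qz z * Real.log (Qz z) := by
      intro z
      field_simp [(hQzpos z).ne']
      ring
    rw [Finset.sum_congr rfl fun z _ => hterm z, hI]
    rw [Finset.sum_comm]
    refine Finset.sum_congr rfl fun z _ => ?_
    have : ∀ t : T, P t * Q t z * Real.log (Q t z / Qz z)
        = P t * (Q t z * Real.log (Q t z)) - P t * Q t z * Real.log (Qz z) := by
      intro t
      rw [Real.log_div (hQpos t z).ne' (hQzpos z).ne']
      ring
    rw [Finset.sum_congr rfl fun t _ => this t, Finset.sum_sub_distrib]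
    simp only [hD, hQz]
    congr 1
    rw [← Finset.sum_mul]
  rw [hval] at hφderiv
  exact hφderiv.hasDerivWithinAt
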